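/- Let g : ℕ × ℤ → ℤ be the iterated-claw coefficient function (g(0,0)=2, g(0,1)=2, g(1,1)=40, g(1,2)=24, g(2,1)=48, g(2,2)=720, g(2,3)=256, g=0 elsewhere for n≤2 and for i<0, and g(n,i) = 20g(n-1,i-1) + 24g(n-2,i-1) - 64g(n-2,i-2) - 384g(n-3,i-3) for n≥3). Then for each n the sequence i ↦ g(n,i) has no internal zeros: if g(n,i) ≠ 0, g(n,k) ≠ 0, and i < j < k, then g(n,j) ≠ 0. -/
import Mathlib

private def U : ℕ → ℤ
  | 0 => 0
  | 1 => 0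
  | 2 => 32
  | (n+3) => 8 * U (n+2) + 32 * U (n+1)

private lemma U_nonneg : ∀ n : ℕ, 0 ≤ U n := by
  intro n
  induction n using Nat.strong_induction_on with
  | _ n ih =>
    rcases n with (_|_|_|n)
    · norm_num [U]
    · norm_num [U]
    · norm_num [U]
    · have h1 := ih (n+2) (by omega)
      have h2 := ih (n+1) (by omega)
      show 0 ≤ 8 * U (n+2) + 32 * U (n+1)
      linarith

private lemma U_pos : ∀ n : ℕ, 2 ≤ n → 0 < U n := by
  intro n
  induction n using Nat.strong_induction_on with
  | _ n ih =>
    rcases n with (_|_|_|_|n)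
    · omega
    · omega
    · intro _; norm_num [U]
    · intro _; show 0 < 8 * U 2 + 32 * U 1; norm_num [U]
    · intro _
      have h1 := ih (n+3) (by omega) (by omega)
      have h2 := U_nonneg (n+2)
      show 0 < 8 * U (n+3) + 32 * U (n+2)
      linarith

theorem stmt16 (g : ℕ × ℤ → ℤ)
    (hneg : ∀ n : ℕ, ∀ i : ℤ, i < 0 → g (n, i) = 0)
    (h00 : g (0, 0) = 2) (h01 : g (0, 1) = 2)
    (h11 : g (1, 1) = 40) (h12 : g (1, 2) = 24)
    (h21 : g (2, 1) = 48) (h22 : g (2, 2) = 720) (h23 : g (2, 3) = 256)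
    (hzero : ∀ n : ℕ, ∀ i : ℤ, n ≤ 2 →
      (n, i) ∉ ({(0, 0), (0, 1), (1, 1), (1, 2), (2, 1), (2, 2), (2, 3)} : Set (ℕ × ℤ)) →
      g (n, i) = 0)
    (hrec : ∀ n : ℕ, ∀ i : ℤ, g (n + 3, i) =
      20 * g (n + 2, i - 1) + 24 * g (n + 1, i - 1) - 64 * g (n + 1, i - 2)
        - 384 * g (n, i - 3)) :
    ∀ n : ℕ, ∀ i j k : ℤ, i < j → j < k →
      g (n, i) ≠ 0 → g (n, k) ≠ 0 → g (n, j) ≠ 0 := by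
  have gz : ∀ (n : ℕ) (i : ℤ), n ≤ 2 →
      ¬((n = 0 ∧ i = 0) ∨ (n = 0 ∧ i = 1) ∨ (n = 1 ∧ i = 1) ∨ (n = 1 ∧ i = 2) ∨
        (n = 2 ∧ i = 1) ∨ (n = 2 ∧ i = 2) ∨ (n = 2 ∧ i = 3)) → g (n, i) = 0 := by
    intro n i hn hni
    refine hzero n i hn ?_
    intro hmem
    apply hni
    simpa [Prod.ext_iff] using hmem
  have key : ∀ n : ℕ,
      (∀ i : ℤ, i < (((n+1)/2 : ℕ) : ℤ) → g (n, i) = 0) ∧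
      (∀ i : ℤ, (n : ℤ) + 1 < i → g (n, i) = 0) ∧
      (∀ i : ℤ, (((n+1)/2 : ℕ) : ℤ) ≤ i → i ≤ (n : ℤ) + 1 → 0 < g (n, i)) ∧
      (∀ i : ℤ, i ≤ (n : ℤ) → 12 * g (n - 1, i - 1) ≤ g (n, i)) ∧
      (2 ≤ n → g (n, (n : ℤ) + 1) = 8 * U n + 24 * U (n - 1)) := by
    intro n
    induction n using Nat.strong_induction_on with
    | _ n ih =>
      rcases n with (_|_|_|n)
      · -- row 0
        refine ⟨?_, ?_, ?_, ?_, ?_⟩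
        · intro i hi
          exact hneg 0 i (by omega)
        · intro i hi
          exact gz 0 i (by norm_num) (by omega)
        · intro i h1 h2
          have : i = 0 ∨ i = 1 := by omega
          rcases this with h | h
          · subst h; rw [h00]; norm_num
          · subst h; rw [h01]; norm_num
        · intro i hi
          show 12 * g (0, i - 1) ≤ g (0, i)
          have h1 : g (0, i - 1) = 0 := hneg 0 _ (by omega)
          rw [h1]
          rcases lt_or_ge i 0 with h | h
          · rw [hneg 0 i h]; norm_num
          · have : i = 0 := by omega
            subst this; rw [h00]; norm_num
        · intro h; omega
      · -- row 1
        refine ⟨?_, ?_, ?_, ?_, ?_⟩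
        · intro i hi
          rcases lt_or_ge i 0 with h | h
          · exact hneg 1 i h
          · have : i = 0 := by omega
            subst this
            exact gz 1 0 (by norm_num) (by omega)
        · intro i hi
          exact gz 1 i (by norm_num) (by omega)
        · intro i h1 h2
          have : i = 1 ∨ i = 2 := by omega
          rcases this with h | h
          · subst h; rw [h11]; norm_num
          · subst h; rw [h12]; norm_num
        · intro i hi
          show 12 * g (0, i - 1) ≤ g (1, i)
          rcases lt_or_ge i 1 with h | h
          · have h1 : g (0, i - 1) = 0 := hneg 0 _ (by omega)
            have h2 : g (1, i) = 0 := by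
              rcases lt_or_ge i 0 with h' | h'
              · exact hneg 1 i h'
              · have : i = 0 := by omega
                subst this
                exact gz 1 0 (by norm_num) (by omega)
            rw [h1, h2]; norm_num
          · have : i = 1 := by omega
            subst this
            rw [show (1:ℤ) - 1 = 0 from by norm_num, h00, h11]; norm_num
        · intro h; omega
      · -- row 2
        refine ⟨?_, ?_, ?_, ?_, ?_⟩
        · intro i hi
          rcases lt_or_ge i 0 with h | h
          · exact hneg 2 i h
          · have : i = 0 := by omega
            subst this
            exact gz 2 0 (by norm_num) (by omega)
        · intro i hi
          exact gz 2 i (by norm_num) (by omega)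
        · intro i h1 h2
          have : i = 1 ∨ i = 2 ∨ i = 3 := by omega
          rcases this with h | h | h
          · subst h; rw [h21]; norm_num
          · subst h; rw [h22]; norm_num
          · subst h; rw [h23]; norm_num
        · intro i hi
          show 12 * g (1, i - 1) ≤ g (2, i)
          rcases lt_or_ge i 1 with h | h
          · have h1 : g (1, i - 1) = 0 := by
              rcases lt_or_ge (i-1) 0 with h' | h'
              · exact hneg 1 _ h'
              · have : i - 1 = 0 := by omega
                rw [this]
                exact gz 1 0 (by norm_num) (by omega)
            have h2 : g (2, i) = 0 := by
              rcases lt_or_ge i 0 with h' | h'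
              · exact hneg 2 i h'
              · have : i = 0 := by omega
                subst this
                exact gz 2 0 (by norm_num) (by omega)
            rw [h1, h2]; norm_num
          · have : i = 1 ∨ i = 2 := by omega
            rcases this with h' | h'
            · subst h'
              rw [show (1:ℤ) - 1 = 0 from by norm_num]
              have h1 : g (1, 0) = 0 := gz 1 0 (by norm_num) (by omega)
              rw [h1, h21]; norm_num
            · subst h'
              rw [show (2:ℤ) - 1 = 1 from by norm_num, h11, h22]; norm_num
        · intro _
          show g (2, ((2:ℕ) : ℤ) + 1) = 8 * U 2 + 24 * U 1
          rw [show (((2:ℕ):ℤ) + 1) = 3 from by norm_num, h23]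
          norm_num [U]
      · -- row n+3
        have nn : ∀ (m : ℕ), m < n+3 → ∀ j : ℤ, 0 ≤ g (m, j) := by
          intro m hm j
          obtain ⟨hA, hA', hB, -, -⟩ := ih m hm
          rcases lt_or_ge j (((m+1)/2 : ℕ) : ℤ) with h | h
          · exact le_of_eq (hA j h).symm
          rcases le_or_gt j ((m:ℤ)+1) with h' | h'
          · exact le_of_lt (hB j h h')
          · exact le_of_eq (hA' j h').symm
        obtain ⟨A2, A2', B2, C2, T2⟩ := ih (n+2) (by omega)
        obtain ⟨A1, A1', B1, C1, T1⟩ := ih (n+1) (by omega)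
        obtain ⟨A0, A0', B0, C0, T0⟩ := ih n (by omega)
        have hA : ∀ i : ℤ, i < (((n+3+1)/2 : ℕ) : ℤ) → g (n+3, i) = 0 := by
          intro i hi
          rw [hrec n i, A2 _ (by omega), A1 _ (by omega), A1 _ (by omega), A0 _ (by omega)]
          ring
        have hA' : ∀ i : ℤ, ((n+3 : ℕ) : ℤ) + 1 < i → g (n+3, i) = 0 := by
          intro i hi
          rw [hrec n i, A2' _ (by omega), A1' _ (by omega), A1' _ (by omega), A0' _ (by omega)]
          ring
        have hC : ∀ i : ℤ, i ≤ ((n+3 : ℕ) : ℤ) → 12 * g (n+2, i - 1) ≤ g (n+3, i) := by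
          intro i hi
          rw [hrec n i]
          have c2 := C2 (i-1) (by omega)
          rw [show i - 1 - 1 = i - 2 from by ring, show n + 2 - 1 = n + 1 from by omega] at c2
          have c1 := C1 (i-2) (by omega)
          rw [show i - 2 - 1 = i - 3 from by ring, show n + 1 - 1 = n from by omega] at c1
          have z0 : 0 ≤ g (n, i-3) := nn n (by omega) _
          have w1 : 0 ≤ g (n+1, i-1) := nn (n+1) (by omega) _
          linarith
        have hT : 2 ≤ n+3 → g (n+3, ((n+3 : ℕ) : ℤ) + 1) = 8 * U (n+3) + 24 * U (n+2) := by
          intro _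
          rcases n with (_|_|k)
          · -- row 3
            show g (3, ((3:ℕ):ℤ)+1) = 8 * U 3 + 24 * U 2
            have h4 := hrec 0 4
            norm_num at h4 ⊢
            rw [h4, h23, h12, h01, gz 1 3 (by norm_num) (by omega)]
            rw [show U 3 = 8 * U 2 + 32 * U 1 from rfl, show U 2 = 32 from rfl,
                show U 1 = 0 from rfl]
            norm_num
          · -- row 4
            show g (4, ((4:ℕ):ℤ)+1) = 8 * U 4 + 24 * U 3
            have h5 := hrec 1 5
            norm_num at h5
            have e3 : g (3, 4) = 8 * U 3 + 24 * U 2 := by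
              have h := T2 (by norm_num)
              norm_num at h
              exact h
            have e0 : g (2, 4) = 0 := gz 2 4 (by norm_num) (by omega)
            norm_num
            rw [h5, e3, e0, h23, h12]
            rw [show U 4 = 8 * U 3 + 32 * U 2 from rfl, show U 3 = 8 * U 2 + 32 * U 1 from rfl,
                show U 2 = 32 from rfl, show U 1 = 0 from rfl]
            ring
          · -- row k+5
            have e4 : g (k+4, ((k+4:ℕ):ℤ)+1) = 8 * U (k+4) + 24 * U (k+3) := T2 (by omega)
            have e3 : g (k+3, ((k+3:ℕ):ℤ)+1) = 8 * U (k+3) + 24 * U (k+2) := T1 (by omega)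
            have e2 : g (k+2, ((k+2:ℕ):ℤ)+1) = 8 * U (k+2) + 24 * U (k+1) := T0 (by omega)
            have ez : g (k+3, ((k+4:ℕ):ℤ)+1) = 0 := A1' _ (by push_cast; omega)
            show g (k+5, ((k+5:ℕ):ℤ)+1) = 8 * U (k+5) + 24 * U (k+4)
            have h5 : g (k+5, ((k+5:ℕ):ℤ)+1) =
                20 * g (k+4, ((k+5:ℕ):ℤ)+1-1) + 24 * g (k+3, ((k+5:ℕ):ℤ)+1-1)
                  - 64 * g (k+3, ((k+5:ℕ):ℤ)+1-2) - 384 * g (k+2, ((k+5:ℕ):ℤ)+1-3) :=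
              hrec (k+2) _
            rw [show ((k+5:ℕ):ℤ)+1-1 = ((k+4:ℕ):ℤ)+1 from by push_cast; ring,
                show ((k+5:ℕ):ℤ)+1-2 = ((k+3:ℕ):ℤ)+1 from by push_cast; ring,
                show ((k+5:ℕ):ℤ)+1-3 = ((k+2:ℕ):ℤ)+1 from by push_cast; ring] at h5
            rw [h5, e4, ez, e3, e2]
            rw [show U (k+5) = 8 * U (k+4) + 32 * U (k+3) from rfl,
                show U (k+4) = 8 * U (k+3) + 32 * U (k+2) from rfl,
                show U (k+3) = 8 * U (k+2) + 32 * U (k+1) from rfl]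
            ring
        have hB : ∀ i : ℤ, (((n+3+1)/2 : ℕ) : ℤ) ≤ i → i ≤ ((n+3 : ℕ) : ℤ) + 1 →
            0 < g (n+3, i) := by
          intro i h1 h2
          rcases eq_or_lt_of_le h2 with htop | hlt
          · rw [htop, hT (by omega)]
            have hu1 := U_pos (n+3) (by omega)
            have hu2 := U_nonneg (n+2)
            linarith
          · have hi3 : i ≤ ((n+3 : ℕ) : ℤ) := by omega
            have hc := hC i hi3
            rcases le_or_gt (((n+2+1)/2 : ℕ) : ℤ) (i-1) with hge | hlt2
            · have hb := B2 (i-1) hge (by omega)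
              linarith
            · have c2 := C2 (i-1) (by omega)
              rw [show i - 1 - 1 = i - 2 from by ring, show n + 2 - 1 = n + 1 from by omega] at c2
              have c1 := C1 (i-2) (by omega)
              rw [show i - 2 - 1 = i - 3 from by ring, show n + 1 - 1 = n from by omega] at c1
              have z0 : 0 ≤ g (n, i-3) := nn n (by omega) _
              have w : 0 < g (n+1, i-1) := B1 (i-1) (by omega) (by omega)
              rw [hrec n i]
              linarith
        exact ⟨hA, hA', hB, hC, hT⟩
  intro n i j k hij hjk hgi hgk
  obtain ⟨hA, hA', hB, -, -⟩ := key n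
  have hi1 : (((n+1)/2 : ℕ) : ℤ) ≤ i := by
    by_contra h
    exact hgi (hA i (by omega))
  have hk2 : k ≤ (n : ℤ) + 1 := by
    by_contra h
    exact hgk (hA' k (by omega))
  exact (hB j (by omega) (by omega)).ne'
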